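/- There exists a finite connected graph G and no ordering of all its vertices, each appearing exactly once, in which consecutive vertices have distance at most 2: specifically, the star K_{1,5} where each of the 5 leaves is subdivided once (a spider with 5 legs of length 2) admits no such ordering. -/

import Mathlib

/-- The spider with 5 legs of length 2: center `0`, middle vertices `1,…,5`
(adjacent to the center), and leaves `6,…,10` with leaf `i+5` adjacent to
middle vertex `i`.  This is the star `K_{1,5}` with every edge subdivided. -/
def spider5 : SimpleGraph (Fin 11) :=
  SimpleGraph.fromRel (fun a b =>
    (a = 0 ∧ 1 ≤ b.val ∧ b.val ≤ 5) ∨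
    (1 ≤ a.val ∧ a.val ≤ 5 ∧ b.val = a.val + 5))

instance spider5.instDecAdj : DecidableRel spider5.Adj := fun a b =>
  decidable_of_iff _ (SimpleGraph.fromRel_adj _ a b).symm

lemma spider5_reachable_zero : ∀ v : Fin 11, spider5.Reachable 0 v := by
  have adj : ∀ a b : Fin 11, spider5.Adj a b → spider5.Reachable a b :=
    fun a b h => h.reachable
  intro v
  fin_cases v
  · exact SimpleGraph.Reachable.refl _
  · exact adj _ _ (by decide)
  · exact adj _ _ (by decide)
  · exact adj _ _ (by decide)
  · exact adj _ _ (by decide)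
  · exact adj _ _ (by decide)
  · exact (adj 0 1 (by decide)).trans (adj 1 6 (by decide))
  · exact (adj 0 2 (by decide)).trans (adj 2 7 (by decide))
  · exact (adj 0 3 (by decide)).trans (adj 3 8 (by decide))
  · exact (adj 0 4 (by decide)).trans (adj 4 9 (by decide))
  · exact (adj 0 5 (by decide)).trans (adj 5 10 (by decide))

lemma spider5_connected : spider5.Connected := by
  rw [SimpleGraph.connected_iff]
  exact ⟨fun u v => (spider5_reachable_zero u).symm.trans (spider5_reachable_zero v),
    ⟨0⟩⟩

lemma spider5_key_table : ∀ v w : Fin 11, 6 ≤ v.val →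
    (w = v ∨ spider5.Adj v w ∨ ∃ u, spider5.Adj v u ∧ spider5.Adj u w) →
    w = v ∨ w = 0 ∨ w.val + 5 = v.val := by decide

lemma spider5_key {v w : Fin 11} (h6 : 6 ≤ v.val) (hd : spider5.dist v w ≤ 2) :
    w = v ∨ w = 0 ∨ w.val + 5 = v.val := by
  obtain ⟨p, hp⟩ := (spider5_connected v w).exists_walk_length_eq_dist
  have hl : p.length ≤ 2 := hp ▸ hd
  refine spider5_key_table v w h6 ?_
  match p, hl with
  | .nil, _ => exact Or.inl rfl
  | .cons h .nil, _ => exact Or.inr (Or.inl h)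
  | .cons h (.cons h' .nil), _ => exact Or.inr (Or.inr ⟨_, h, h'⟩)
  | .cons h (.cons h' (.cons h'' q)), hl =>
      simp [SimpleGraph.Walk.length_cons] at hl

set_option maxHeartbeats 1000000 in
/-- There is a finite connected graph — namely the spider with 5 legs of
length 2 — admitting no ordering of all its vertices (each appearing exactly
once) in which consecutive vertices have graph distance at most 2. -/
theorem stmt2 :
    spider5.Connected ∧
    ¬ ∃ l : List (Fin 11), l.Nodup ∧ (∀ v : Fin 11, v ∈ l) ∧
        ∀ i, (h : i + 1 < l.length) →
          spider5.dist (l.get ⟨i, by omega⟩) (l.get ⟨i + 1, h⟩) ≤ 2 := by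
  refine ⟨spider5_connected, ?_⟩
  rintro ⟨l, hnd, hall, hchain⟩
  have hlen : l.length = 11 := by
    have h1 : l.toFinset = Finset.univ := by
      ext v; simp [hall v]
    have h2 := List.toFinset_card_of_nodup hnd
    rw [h1] at h2
    simpa using h2.symm
  have hinj : ∀ i j : ℕ, (hi : i < l.length) → (hj : j < l.length) →
      l.get ⟨i, hi⟩ = l.get ⟨j, hj⟩ → i = j := by
    intro i j hi hj h
    exact congrArg Fin.val ((List.Nodup.get_inj_iff hnd).mp h)
  have pos_lt : ∀ v : Fin 11, l.idxOf v < l.length :=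
    fun v => List.idxOf_lt_length_iff.mpr (hall v)
  have pos_get : ∀ v : Fin 11, l.get ⟨l.idxOf v, pos_lt v⟩ = v :=
    fun v => List.idxOf_get _
  have leafpos : ∀ v : Fin 11, 6 ≤ v.val →
      l.idxOf v = 0 ∨ l.idxOf v = 10 ∨ l.idxOf v = l.idxOf (0 : Fin 11) + 1 ∨
        l.idxOf v + 1 = l.idxOf (0 : Fin 11) := by
    intro v h6
    by_cases hp0 : l.idxOf v = 0
    · exact Or.inl hp0
    by_cases hp10 : l.idxOf v = 10
    · exact Or.inr (Or.inl hp10)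
    have hplt : l.idxOf v < 11 := by have := pos_lt v; omega
    have hpm : l.idxOf v - 1 + 1 < l.length := by omega
    have hpp : l.idxOf v + 1 < l.length := by omega
    have h1 : spider5.dist v (l.get ⟨l.idxOf v - 1, by omega⟩) ≤ 2 := by
      rw [SimpleGraph.dist_comm]
      have h := hchain (l.idxOf v - 1) hpm
      have he : (⟨l.idxOf v - 1 + 1, hpm⟩ : Fin l.length) = ⟨l.idxOf v, pos_lt v⟩ :=
        Fin.ext (by simp; omega)
      rw [he, pos_get v] at h
      exact h
    have h2 : spider5.dist v (l.get ⟨l.idxOf v + 1, hpp⟩) ≤ 2 := by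
      have h := hchain (l.idxOf v) hpp
      have he : (⟨l.idxOf v, by omega⟩ : Fin l.length) = ⟨l.idxOf v, pos_lt v⟩ := rfl
      rw [he, pos_get v] at h
      exact h
    have k1 := spider5_key h6 h1
    have k2 := spider5_key h6 h2
    have n1 : l.get ⟨l.idxOf v - 1, by omega⟩ ≠ v := by
      intro h
      have := hinj (l.idxOf v - 1) (l.idxOf v) (by omega) (pos_lt v)
        (by rw [h, pos_get v])
      omega
    have n2 : l.get ⟨l.idxOf v + 1, hpp⟩ ≠ v := by
      intro h
      have := hinj (l.idxOf v + 1) (l.idxOf v) hpp (pos_lt v)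
        (by rw [h, pos_get v])
      omega
    rcases k1 with h | h | hval1
    · exact absurd h n1
    · right; right; left
      have := hinj (l.idxOf (0 : Fin 11)) (l.idxOf v - 1) (pos_lt 0) (by omega)
        (by rw [pos_get]; exact h.symm)
      omega
    · rcases k2 with h | h | hval2
      · exact absurd h n2
      · right; right; right
        have := hinj (l.idxOf (0 : Fin 11)) (l.idxOf v + 1) (pos_lt 0) hpp
          (by rw [pos_get]; exact h.symm)
        omega
      · exfalso
        have heq : l.get ⟨l.idxOf v - 1, by omega⟩ = l.get ⟨l.idxOf v + 1, hpp⟩ :=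
          Fin.val_injective (by omega)
        have := hinj (l.idxOf v - 1) (l.idxOf v + 1) (by omega) hpp heq
        omega
  have d : ∀ v w : Fin 11, v ≠ w → l.idxOf v ≠ l.idxOf w := by
    intro v w hvw h
    apply hvw
    rw [← pos_get v, ← pos_get w]
    congr 1
    exact Fin.ext h
  have i6 := leafpos 6 (by decide)
  have i7 := leafpos 7 (by decide)
  have i8 := leafpos 8 (by decide)
  have i9 := leafpos 9 (by decide)
  have i10 := leafpos 10 (by decide)
  have d1 := d 6 7 (by decide); have d2 := d 6 8 (by decide)
  have d3 := d 6 9 (by decide); have d4 := d 6 10 (by decide)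
  have d5 := d 7 8 (by decide); have d6 := d 7 9 (by decide)
  have d7 := d 7 10 (by decide); have d8 := d 8 9 (by decide)
  have d9 := d 8 10 (by decide); have d10 := d 9 10 (by decide)
  omega
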